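/- Let X, Y be compact Hausdorff spaces, |X| > 1, and let c be a cross ({r} × Y) ∪ (X × {a}) which is a quasi-homeomorphism (a Vietoris limit of graphs of homeomorphisms X → Y). Then r is a non-isolated point of X and a is a non-isolated point of Y. -/
import Mathlib


open Topology

/-- The hyperspace of closed subsets of a topological space. -/
def ClosedSubsets (Z : Type*) [TopologicalSpace Z] := {s : Set Z // IsClosed s}

/-- The Vietoris topology on the hyperspace of closed subsets. -/
instance ClosedSubsets.instTopologicalSpace (Z : Type*) [TopologicalSpace Z] :
    TopologicalSpace (ClosedSubsets Z) :=
  TopologicalSpace.generateFrom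
    ({A | ∃ o : Set Z, IsOpen o ∧ A = {c : ClosedSubsets Z | c.val ⊆ o}} ∪
     {A | ∃ o : Set Z, IsOpen o ∧ A = {c : ClosedSubsets Z | (c.val ∩ o).Nonempty}})

/-- The graph of a homeomorphism, as a closed subset of `X × Y`. -/
def homeoGraph {X Y : Type*} [TopologicalSpace X] [TopologicalSpace Y] [T2Space Y]
    (φ : X ≃ₜ Y) : ClosedSubsets (X × Y) :=
  ⟨{p : X × Y | p.2 = φ p.1}, isClosed_eq continuous_snd (φ.continuous.comp continuous_fst)⟩

/-- The cross with repeller `r` and attractor `a`, as a closed subset of `X × Y`. -/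
def crossClosed {X Y : Type*} [TopologicalSpace X] [TopologicalSpace Y]
    [T1Space X] [T1Space Y] (r : X) (a : Y) : ClosedSubsets (X × Y) :=
  ⟨({r} ×ˢ (Set.univ : Set Y)) ∪ ((Set.univ : Set X) ×ˢ {a}),
    (isClosed_singleton.prod isClosed_univ).union (isClosed_univ.prod isClosed_singleton)⟩

/-- If `|X| > 1` and the cross with center `(r, a)` is a quasi-homeomorphism (a Vietoris limit
of graphs of homeomorphisms `X → Y`), then `r` is non-isolated in `X` and `a` is non-isolated
in `Y`. -/

lemma cross_hit_two {X Y : Type*} [TopologicalSpace X] [T2Space X]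
    [TopologicalSpace Y] [T2Space Y] (r : X) (a : Y)
    (hq : crossClosed r a ∈ closure (Set.range (fun φ : X ≃ₜ Y => homeoGraph φ)))
    (W₁ W₂ : Set (X × Y)) (h₁ : IsOpen W₁) (h₂ : IsOpen W₂)
    (hc₁ : ((crossClosed r a).val ∩ W₁).Nonempty)
    (hc₂ : ((crossClosed r a).val ∩ W₂).Nonempty) :
    ∃ φ : X ≃ₜ Y, ((homeoGraph φ).val ∩ W₁).Nonempty ∧
      ((homeoGraph φ).val ∩ W₂).Nonempty := by
  set A : Set (ClosedSubsets (X × Y)) :=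
    {c | (c.val ∩ W₁).Nonempty} ∩ {c | (c.val ∩ W₂).Nonempty} with hA
  have hAopen : IsOpen A := by
    refine TopologicalSpace.GenerateOpen.inter _ _ ?_ ?_
    · exact .basic _ (Or.inr ⟨W₁, h₁, rfl⟩)
    · exact .basic _ (Or.inr ⟨W₂, h₂, rfl⟩)
  have hmem : crossClosed r a ∈ A := ⟨hc₁, hc₂⟩
  obtain ⟨c, hcA, hcr⟩ := mem_closure_iff.mp hq A hAopen hmem
  obtain ⟨φ, rfl⟩ := hcr
  exact ⟨φ, hcA.1, hcA.2⟩

theorem cross_quasi_homeomorphism_nonisolated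
    {X Y : Type*} [TopologicalSpace X] [CompactSpace X] [T2Space X]
    [TopologicalSpace Y] [CompactSpace Y] [T2Space Y]
    (hX : ∃ x y : X, x ≠ y) (r : X) (a : Y)
    (hq : crossClosed r a ∈ closure (Set.range (fun φ : X ≃ₜ Y => homeoGraph φ))) :
    (𝓝[≠] r).NeBot ∧ (𝓝[≠] a).NeBot := by
  -- There is at least one homeomorphism
  have hφ : ∃ φ : X ≃ₜ Y, True := by
    rcases (Set.range (fun φ : X ≃ₜ Y => homeoGraph φ)).eq_empty_or_nonempty with h | h
    · rw [h, closure_empty] at hq; exact absurd hq (Set.notMem_empty _)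
    · obtain ⟨_, φ₀, rfl⟩ := h; exact ⟨φ₀, trivial⟩
  obtain ⟨φ₀, -⟩ := hφ
  obtain ⟨x₁, x₂, hx⟩ := hX
  -- Y has a point distinct from a
  have hY : ∃ y : Y, y ≠ a := by
    rcases eq_or_ne (φ₀ x₁) a with h | h
    · exact ⟨φ₀ x₂, by rw [← h]; exact fun e => hx (φ₀.injective e.symm)⟩
    · exact ⟨φ₀ x₁, h⟩
  obtain ⟨y₂, hy₂⟩ := hY
  constructor
  · rw [Filter.neBot_iff]
    intro hbot
    have hro : IsOpen ({r} : Set X) := (isOpen_singleton_iff_punctured_nhds _).mpr hbot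
    obtain ⟨V₂, V₁, hV₂, hV₁, hyV₂, haV₁, hdisj⟩ := t2_separation hy₂
    obtain ⟨φ, ⟨p₁, hp₁g, hp₁⟩, ⟨p₂, hp₂g, hp₂⟩⟩ :=
      cross_hit_two r a hq ({r} ×ˢ V₁) ({r} ×ˢ V₂) (hro.prod hV₁) (hro.prod hV₂)
        ⟨(r, a), Or.inl ⟨rfl, trivial⟩, rfl, haV₁⟩
        ⟨(r, y₂), Or.inl ⟨rfl, trivial⟩, rfl, hyV₂⟩
    have e1 : p₁.2 = φ r := by rw [hp₁g, hp₁.1]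
    have e2 : p₂.2 = φ r := by rw [hp₂g, hp₂.1]
    have m1 : φ r ∈ V₁ := e1 ▸ hp₁.2
    have m2 : φ r ∈ V₂ := e2 ▸ hp₂.2
    exact Set.disjoint_left.mp hdisj m2 m1
  · rw [Filter.neBot_iff]
    intro hbot
    have hao : IsOpen ({a} : Set Y) := (isOpen_singleton_iff_punctured_nhds _).mpr hbot
    obtain ⟨U₁, U₂, hU₁, hU₂, hx₁, hx₂, hdisj⟩ := t2_separation hx
    obtain ⟨φ, ⟨p₁, hp₁g, hp₁⟩, ⟨p₂, hp₂g, hp₂⟩⟩ :=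
      cross_hit_two r a hq (U₁ ×ˢ {a}) (U₂ ×ˢ {a}) (hU₁.prod hao) (hU₂.prod hao)
        ⟨(x₁, a), Or.inr ⟨trivial, rfl⟩, hx₁, rfl⟩
        ⟨(x₂, a), Or.inr ⟨trivial, rfl⟩, hx₂, rfl⟩
    have e1 : φ p₁.1 = a := (hp₁g : p₁.2 = φ p₁.1).symm.trans hp₁.2
    have e2 : φ p₂.1 = a := (hp₂g : p₂.2 = φ p₂.1).symm.trans hp₂.2
    have : p₁.1 = p₂.1 := φ.injective (e1.trans e2.symm)
    exact Set.disjoint_left.mp hdisj hp₁.1 (this ▸ hp₂.1)
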